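/- Let 0 < r ≤ 1/2 and let l₁, l₂ be unit segments lying entirely outside the open disk B_r of radius r about the origin O, at distances δ₁, δ₂ from O, in directions α₁, α₂. If |α₁ − α₂| (mod π) ≥ arcsin(δ₁/r) + arcsin(δ₂/r), then the interiors of Δ₁ ∩ B_r and Δ₂ ∩ B_r are disjoint, where Δᵢ is the triangle with base lᵢ and apex O. -/

import Mathlib

open MeasureTheory Metric Set

/-- The unit vector in direction `α`. -/
noncomputable def dirVec (α : ℝ) : EuclideanSpace ℝ (Fin 2) :=
  (WithLp.equiv 2 (Fin 2 → ℝ)).symm ![Real.cos α, Real.sin α]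

lemma arcsin_abs_sin_le_one (u : ℝ) : |Real.sin u| ≤ 1 :=
  abs_le.2 ⟨Real.neg_one_le_sin u, Real.sin_le_one u⟩

lemma cos_arcsin_abs_sin (u : ℝ) : Real.cos (Real.arcsin |Real.sin u|) = |Real.cos u| := by
  rw [Real.cos_arcsin, sq_abs]
  have : 1 - Real.sin u ^ 2 = Real.cos u ^ 2 := by
    have := Real.sin_sq_add_cos_sq u; linarith
  rw [this, Real.sqrt_sq_eq_abs]

lemma sin_arcsin_abs_sin (u : ℝ) : Real.sin (Real.arcsin |Real.sin u|) = |Real.sin u| :=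
  Real.sin_arcsin (le_trans (by norm_num) (abs_nonneg _)) (arcsin_abs_sin_le_one u)

lemma arcsin_abs_sin_add (u v : ℝ) :
    Real.arcsin |Real.sin (u + v)| ≤ Real.arcsin |Real.sin u| + Real.arcsin |Real.sin v| := by
  set a := Real.arcsin |Real.sin u| with ha
  set b := Real.arcsin |Real.sin v| with hb
  have ha0 : 0 ≤ a := Real.arcsin_nonneg.2 (abs_nonneg _)
  have hb0 : 0 ≤ b := Real.arcsin_nonneg.2 (abs_nonneg _)
  by_cases hab : Real.pi / 2 ≤ a + b
  · exact le_trans (Real.arcsin_le_pi_div_two _) hab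
  · push_neg at hab
    have hkey : |Real.sin (u + v)| ≤ Real.sin (a + b) := by
      rw [Real.sin_add]
      calc |Real.sin u * Real.cos v + Real.cos u * Real.sin v|
          ≤ |Real.sin u * Real.cos v| + |Real.cos u * Real.sin v| := abs_add_le _ _
        _ = |Real.sin u| * |Real.cos v| + |Real.cos u| * |Real.sin v| := by
            rw [abs_mul, abs_mul]
        _ = Real.sin a * Real.cos b + Real.cos a * Real.sin b := by
            rw [← sin_arcsin_abs_sin u, ← sin_arcsin_abs_sin v,
              ← cos_arcsin_abs_sin u, ← cos_arcsin_abs_sin v]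
        _ = Real.sin (a + b) := (Real.sin_add a b).symm
    calc Real.arcsin |Real.sin (u + v)| ≤ Real.arcsin (Real.sin (a + b)) :=
          Real.monotone_arcsin hkey
      _ = a + b := Real.arcsin_sin (by linarith) (by linarith)

lemma arcsin_abs_sin_sub (u v : ℝ) :
    Real.arcsin |Real.sin (u - v)| ≤ Real.arcsin |Real.sin u| + Real.arcsin |Real.sin v| := by
  have := arcsin_abs_sin_add u (-v)
  simpa [Real.sin_neg, ← sub_eq_add_neg] using this

lemma min_le_arcsin_abs_sin {t : ℝ} (h : |t| < Real.pi) :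
    min |t| (Real.pi - |t|) ≤ Real.arcsin |Real.sin t| := by
  set m := min |t| (Real.pi - |t|) with hm
  have hm0 : 0 ≤ m := le_min (abs_nonneg _) (by linarith)
  have hm2 : m ≤ Real.pi / 2 := by
    rcases min_le_iff.1 (le_refl m) with h1 | h1 <;>
    · rcases le_or_gt (|t|) (Real.pi - |t|) with h2 | h2
      · rw [hm, min_eq_left h2]; linarith [min_le_right (|t|) (Real.pi - |t|), abs_nonneg t]
      · rw [hm, min_eq_right h2.le]; linarith [abs_nonneg t]
  have h1 : Real.sin |t| = |Real.sin t| := by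
    rcases abs_cases t with ⟨h2, _⟩ | ⟨h2, _⟩
    · rw [h2, abs_of_nonneg]
      exact Real.sin_nonneg_of_nonneg_of_le_pi (by linarith [abs_nonneg t, h2.symm ▸ abs_nonneg t]) (by linarith)
    · rw [h2, Real.sin_neg, abs_of_nonpos (Real.sin_nonpos_of_nonpos_of_neg_pi_le (by linarith) (by linarith [(abs_lt.1 h).1]))]
  have hsin : Real.sin m = |Real.sin t| := by
    rcases le_or_gt (|t|) (Real.pi - |t|) with h2 | h2
    · rw [hm, min_eq_left h2, h1]
    · rw [hm, min_eq_right h2.le, Real.sin_pi_sub, h1]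
  have : m = Real.arcsin |Real.sin t| := by
    rw [← hsin, Real.arcsin_sin (by linarith) hm2]
  exact this.le

lemma dirVec_apply0 (α : ℝ) : dirVec α 0 = Real.cos α := rfl
lemma dirVec_apply1 (α : ℝ) : dirVec α 1 = Real.sin α := rfl

lemma enorm_eq (x : EuclideanSpace ℝ (Fin 2)) : ‖x‖ = Real.sqrt (x 0 ^ 2 + x 1 ^ 2) := by
  rw [EuclideanSpace.norm_eq, Fin.sum_univ_two]
  simp [Real.norm_eq_abs, sq_abs]

example (x y : EuclideanSpace ℝ (Fin 2)) (i : Fin 2) : (x + y) i = x i + y i := rfl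
example (t : ℝ) (x : EuclideanSpace ℝ (Fin 2)) (i : Fin 2) : (t • x) i = t * x i := rfl
example (x : EuclideanSpace ℝ (Fin 2)) : dist 0 x = ‖x‖ := by rw [dist_zero_left]

lemma abs_le_norm_coord (c s y0 y1 : ℝ) (hcs : s ^ 2 + c ^ 2 = 1) :
    |(-s) * y0 + c * y1| ≤ Real.sqrt (y0 ^ 2 + y1 ^ 2) := by
  rw [← Real.sqrt_sq_eq_abs]
  apply Real.sqrt_le_sqrt
  nlinarith [sq_nonneg (c * y0 + s * y1)]

lemma line_dist_le {p : EuclideanSpace ℝ (Fin 2)} {α δ : ℝ}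
    (hδ : Metric.infDist 0
      (affineSpan ℝ {p, p + dirVec α} : Set (EuclideanSpace ℝ (Fin 2))) = δ) :
    |(-Real.sin α) * p 0 + Real.cos α * p 1| ≤ δ := by
  by_contra hlt
  push_neg at hlt
  rw [← hδ] at hlt
  obtain ⟨y, hy, hdy⟩ := (Metric.infDist_lt_iff
    ⟨p, subset_affineSpan ℝ _ (by simp)⟩).1 hlt
  -- y = p + t • dirVec α
  have hy' : (y - p) +ᵥ p ∈ line[ℝ, p, p + dirVec α] := by
    simpa [vadd_eq_add, sub_add_cancel] using hy
  rw [vadd_left_mem_affineSpan_pair] at hy'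
  obtain ⟨t, ht⟩ := hy'
  have hty : y = p + t • dirVec α := by
    have : (p + dirVec α) -ᵥ p = dirVec α := by
      rw [vsub_eq_sub]; abel
    rw [this] at ht
    rw [ht]; abel
  have hy0 : y 0 = p 0 + t * Real.cos α := by rw [hty]; rfl
  have hy1 : y 1 = p 1 + t * Real.sin α := by rw [hty]; rfl
  have hle : |(-Real.sin α) * p 0 + Real.cos α * p 1| ≤ ‖y‖ := by
    have h1 : (-Real.sin α) * p 0 + Real.cos α * p 1
        = (-Real.sin α) * y 0 + Real.cos α * y 1 := by
      rw [hy0, hy1]; ring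
    rw [h1, enorm_eq]
    exact abs_le_norm_coord _ _ _ _ (Real.sin_sq_add_cos_sq α)
  rw [dist_zero_left] at hdy
  linarith

lemma key_bound {r α δ : ℝ} {p x : EuclideanSpace ℝ (Fin 2)}
    (hr : 0 < r)
    (hout : segment ℝ p (p + dirVec α) ∩ ball 0 r = ∅)
    (hδ : Metric.infDist 0
      (affineSpan ℝ {p, p + dirVec α} : Set (EuclideanSpace ℝ (Fin 2))) = δ)
    (hx : x ∈ convexHull ℝ ({p, p + dirVec α, 0} : Set (EuclideanSpace ℝ (Fin 2)))) :
    |(-Real.sin α) * x 0 + Real.cos α * x 1| * r ≤ δ * ‖x‖ := by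
  have hδ0 : 0 ≤ δ := hδ ▸ Metric.infDist_nonneg
  have hset : ({p, p + dirVec α, 0} : Set (EuclideanSpace ℝ (Fin 2)))
      = insert 0 {p, p + dirVec α} := by
    ext z; simp; tauto
  rw [hset, convexHull_insert ⟨p, by simp⟩, convexHull_pair] at hx
  rw [mem_convexJoin] at hx
  obtain ⟨a, ha, Q, hQ, hxseg⟩ := hx
  rw [mem_singleton_iff] at ha
  subst ha
  -- x = t • Q
  rw [segment_eq_image'] at hxseg
  obtain ⟨t, htI, hxt⟩ := hxseg
  have hxQ : x = t • Q := by rw [← hxt]; simp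
  -- Q = p + u • dirVec α
  rw [segment_eq_image'] at hQ
  obtain ⟨u, huI, hQu⟩ := hQ
  have hQu' : Q = p + u • dirVec α := by
    rw [← hQu]; congr 1; rw [add_sub_cancel_left]
  -- ‖Q‖ ≥ r
  have hQr : r ≤ ‖Q‖ := by
    have hQnb : Q ∉ ball (0 : EuclideanSpace ℝ (Fin 2)) r := by
      intro hmem
      have : Q ∈ segment ℝ p (p + dirVec α) ∩ ball 0 r :=
        ⟨by rw [segment_eq_image']; exact ⟨u, huI, hQu⟩, hmem⟩
      rw [hout] at this; exact this
    rw [mem_ball, dist_zero_right] at hQnb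
    linarith [not_lt.1 hQnb]
  -- coordinates
  have hc : |(-Real.sin α) * Q 0 + Real.cos α * Q 1| ≤ δ := by
    have h0 : Q 0 = p 0 + u * Real.cos α := by rw [hQu']; rfl
    have h1 : Q 1 = p 1 + u * Real.sin α := by rw [hQu']; rfl
    have : (-Real.sin α) * Q 0 + Real.cos α * Q 1
        = (-Real.sin α) * p 0 + Real.cos α * p 1 := by rw [h0, h1]; ring
    rw [this]
    exact line_dist_le hδ
  have hx0 : x 0 = t * Q 0 := by rw [hxQ]; rfl
  have hx1 : x 1 = t * Q 1 := by rw [hxQ]; rfl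
  have hnx : ‖x‖ = t * ‖Q‖ := by
    rw [hxQ, norm_smul, Real.norm_eq_abs, abs_of_nonneg htI.1]
  have habs : |(-Real.sin α) * x 0 + Real.cos α * x 1|
      = t * |(-Real.sin α) * Q 0 + Real.cos α * Q 1| := by
    rw [hx0, hx1, show (-Real.sin α) * (t * Q 0) + Real.cos α * (t * Q 1)
      = t * ((-Real.sin α) * Q 0 + Real.cos α * Q 1) by ring, abs_mul,
      abs_of_nonneg htI.1]
  rw [habs, hnx]
  have ht0 : 0 ≤ t := htI.1
  have h1 : t * |(-Real.sin α) * Q 0 + Real.cos α * Q 1| * r ≤ t * δ * r :=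
    mul_le_mul_of_nonneg_right (mul_le_mul_of_nonneg_left hc ht0) hr.le
  have h2 : t * δ * r ≤ t * δ * ‖Q‖ :=
    mul_le_mul_of_nonneg_left hQr (mul_nonneg ht0 hδ0)
  calc t * |(-Real.sin α) * Q 0 + Real.cos α * Q 1| * r ≤ t * δ * ‖Q‖ := le_trans h1 h2
    _ = δ * (t * ‖Q‖) := by ring

lemma dirVec_norm (θ : ℝ) : ‖dirVec θ‖ = 1 := by
  rw [enorm_eq]
  have : dirVec θ 0 = Real.cos θ := rfl
  rw [this, show dirVec θ 1 = Real.sin θ from rfl]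
  rw [show Real.cos θ ^2 + Real.sin θ ^2 = 1 by
    have := Real.sin_sq_add_cos_sq θ; linarith]
  exact Real.sqrt_one

lemma int_cast_eq_zero_of_abs_mul_pi_lt {k : ℤ} (h : |(k:ℝ) * Real.pi| < Real.pi) :
    (k : ℝ) = 0 := by
  have hπ := Real.pi_pos
  rw [abs_mul, abs_of_pos hπ] at h
  have h1 : |(k:ℝ)| < 1 := by
    by_contra hc; push_neg at hc; nlinarith
  have h2 : |k| < 1 := by exact_mod_cast h1
  have : k = 0 := by
    rcases abs_cases k with ⟨he, _⟩ | ⟨he, _⟩ <;> omega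
  exact_mod_cast this

set_option maxHeartbeats 1000000 in
/-- If two unit needles in directions `α₁, α₂ ∈ [0,π)` lie entirely outside the open disk
`B_r`, are at distances `δ₁, δ₂` from the origin, and their angular separation (mod π) is
at least `arcsin(δ₁/r) + arcsin(δ₂/r)`, then the interiors of the inner parts
`Δᵢ ∩ B_r` of the corresponding triangles are disjoint. -/
theorem interior_parts_disjoint (r α₁ α₂ δ₁ δ₂ : ℝ)
    (p₁ p₂ : EuclideanSpace ℝ (Fin 2))
    (hr1 : 0 < r) (hr2 : r ≤ 1 / 2)
    (hα₁ : α₁ ∈ Set.Ico 0 Real.pi) (hα₂ : α₂ ∈ Set.Ico 0 Real.pi)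
    (hout₁ : segment ℝ p₁ (p₁ + dirVec α₁) ∩ ball 0 r = ∅)
    (hout₂ : segment ℝ p₂ (p₂ + dirVec α₂) ∩ ball 0 r = ∅)
    (hδ₁ : Metric.infDist 0
      (affineSpan ℝ {p₁, p₁ + dirVec α₁} : Set (EuclideanSpace ℝ (Fin 2))) = δ₁)
    (hδ₂ : Metric.infDist 0
      (affineSpan ℝ {p₂, p₂ + dirVec α₂} : Set (EuclideanSpace ℝ (Fin 2))) = δ₂)
    (hsep : Real.arcsin (δ₁ / r) + Real.arcsin (δ₂ / r) ≤
      min |α₁ - α₂| (Real.pi - |α₁ - α₂|)) :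
    interior ((convexHull ℝ {p₁, p₁ + dirVec α₁, (0 : EuclideanSpace ℝ (Fin 2))}) ∩ ball 0 r) ∩
      interior ((convexHull ℝ {p₂, p₂ + dirVec α₂, (0 : EuclideanSpace ℝ (Fin 2))}) ∩ ball 0 r)
      = ∅ := by
  by_contra hne
  obtain ⟨P, hP1, hP2⟩ := Set.nonempty_iff_ne_empty.2 hne
  obtain ⟨ε₁, hε₁, hb1⟩ := Metric.isOpen_iff.1 isOpen_interior P hP1
  obtain ⟨ε₂, hε₂, hb2⟩ := Metric.isOpen_iff.1 isOpen_interior P hP2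
  set H₁ : Set (EuclideanSpace ℝ (Fin 2)) :=
    convexHull ℝ {p₁, p₁ + dirVec α₁, (0 : EuclideanSpace ℝ (Fin 2))} with hH₁
  set H₂ : Set (EuclideanSpace ℝ (Fin 2)) :=
    convexHull ℝ {p₂, p₂ + dirVec α₂, (0 : EuclideanSpace ℝ (Fin 2))} with hH₂
  have hsubP : ball P (min ε₁ ε₂) ⊆ H₁ ∩ H₂ := by
    intro y hy
    exact ⟨(interior_subset (hb1 (ball_subset_ball (min_le_left _ _) hy))).1,
      (interior_subset (hb2 (ball_subset_ball (min_le_right _ _) hy))).1⟩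
  have hεm : 0 < min ε₁ ε₂ := lt_min hε₁ hε₂
  -- find a nonzero center
  obtain ⟨P', ε', hε', hP'0, hsub⟩ :
      ∃ (P' : EuclideanSpace ℝ (Fin 2)) (ε' : ℝ), 0 < ε' ∧ P' ≠ 0 ∧
        ball P' ε' ⊆ H₁ ∩ H₂ := by
    by_cases hP0 : P = 0
    · refine ⟨P + (min ε₁ ε₂ / 2) • dirVec 0, min ε₁ ε₂ / 2, by linarith, ?_, ?_⟩
      · intro h
        have hnz : ‖P + (min ε₁ ε₂ / 2) • dirVec 0‖ = min ε₁ ε₂ / 2 := by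
          rw [hP0, zero_add, norm_smul, dirVec_norm, Real.norm_eq_abs,
            abs_of_pos (by linarith), mul_one]
        rw [h, norm_zero] at hnz
        linarith
      · intro y hy
        apply hsubP
        rw [mem_ball] at hy ⊢
        calc dist y P ≤ dist y (P + (min ε₁ ε₂ / 2) • dirVec 0)
              + dist (P + (min ε₁ ε₂ / 2) • dirVec 0) P := dist_triangle _ _ _
          _ < min ε₁ ε₂ / 2 + min ε₁ ε₂ / 2 := by
              apply add_lt_add_of_lt_of_le hy
              rw [dist_eq_norm, add_sub_cancel_left, norm_smul, dirVec_norm,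
                Real.norm_eq_abs, abs_of_pos (by linarith), mul_one]
          _ = min ε₁ ε₂ := by ring
    · exact ⟨P, min ε₁ ε₂, hεm, hP0, hsubP⟩
  set R := ‖P'‖ with hRdef
  have hR : 0 < R := norm_pos_iff.2 hP'0
  set z : ℂ := ⟨P' 0, P' 1⟩ with hzdef
  have hz : z ≠ 0 := by
    intro h
    apply hP'0
    have h0 : P' 0 = 0 := congrArg Complex.re h
    have h1 : P' 1 = 0 := congrArg Complex.im h
    ext i
    fin_cases i <;> simpa
  have habs : ‖z‖ = R := by
    rw [Complex.norm_def, Complex.normSq_apply, hRdef, enorm_eq]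
    norm_num [hzdef]
    ring_nf
  set β₀ := z.arg with hβ₀
  have hc0 : P' 0 = R * Real.cos β₀ := by
    rw [hβ₀, Complex.cos_arg hz, habs]
    field_simp [hzdef]
    rfl
  have hs0 : P' 1 = R * Real.sin β₀ := by
    rw [hβ₀, Complex.sin_arg, habs]
    field_simp [hzdef]
    rfl
  set s₀ : ℝ := min (ε' / (2 * R)) (1 / 2) with hs₀def
  have hs₀pos : 0 < s₀ := lt_min (by positivity) (by norm_num)
  have hs₀le : s₀ ≤ 1 / 2 := min_le_right _ _
  set xs : ℝ → EuclideanSpace ℝ (Fin 2) := fun s => R • dirVec (β₀ + s) with hxs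
  -- the perturbed points stay in the ball
  have hmem : ∀ s : ℝ, 0 ≤ s → s ≤ s₀ → xs s ∈ H₁ ∩ H₂ := by
    intro s hs0' hss0
    apply hsub
    rw [mem_ball, dist_eq_norm]
    have he0 : (xs s - P') 0 = R * Real.cos (β₀ + s) - R * Real.cos β₀ := by
      rw [show (xs s - P') 0 = xs s 0 - P' 0 from rfl, hc0]; rfl
    have he1 : (xs s - P') 1 = R * Real.sin (β₀ + s) - R * Real.sin β₀ := by
      rw [show (xs s - P') 1 = xs s 1 - P' 1 from rfl, hs0]; rfl
    have hcs : Real.cos (β₀ + s) * Real.cos β₀ + Real.sin (β₀ + s) * Real.sin β₀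
        = Real.cos s := by
      rw [← Real.cos_sub]; congr 1; ring
    have hA : (xs s - P') 0 ^ 2 + (xs s - P') 1 ^ 2 = R ^ 2 * (2 - 2 * Real.cos s) := by
      rw [he0, he1]
      have h1 := Real.sin_sq_add_cos_sq (β₀ + s)
      have h2 := Real.sin_sq_add_cos_sq β₀
      linear_combination R^2 * h1 + R^2 * h2 - 2 * R^2 * hcs
    have hcb : 2 - 2 * Real.cos s ≤ s ^ 2 := by
      have := Real.one_sub_sq_div_two_le_cos (x := s)
      linarith
    have hnorm : ‖xs s - P'‖ ≤ R * s := by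
      rw [enorm_eq, hA]
      calc Real.sqrt (R ^ 2 * (2 - 2 * Real.cos s))
          ≤ Real.sqrt ((R * s) ^ 2) := by
            apply Real.sqrt_le_sqrt; nlinarith
        _ = R * s := by
            rw [Real.sqrt_sq (by positivity)]
    have : R * s ≤ ε' / 2 := by
      have h1 : s ≤ ε' / (2 * R) := le_trans hss0 (min_le_left _ _)
      calc R * s ≤ R * (ε' / (2 * R)) := by
            apply mul_le_mul_of_nonneg_left h1 hR.le
        _ = ε' / 2 := by field_simp
    linarith
  -- the angular bound
  have hsin_le : ∀ (α δ : ℝ) (p : EuclideanSpace ℝ (Fin 2)),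
      segment ℝ p (p + dirVec α) ∩ ball 0 r = ∅ →
      Metric.infDist 0 (affineSpan ℝ {p, p + dirVec α} : Set (EuclideanSpace ℝ (Fin 2))) = δ →
      ∀ s : ℝ, xs s ∈ convexHull ℝ ({p, p + dirVec α, 0} : Set (EuclideanSpace ℝ (Fin 2))) →
      |Real.sin (β₀ + s - α)| ≤ δ / r := by
    intro α δ p hout hδ s hm
    have hkb := key_bound hr1 hout hδ hm
    have h0 : xs s 0 = R * Real.cos (β₀ + s) := rfl
    have h1 : xs s 1 = R * Real.sin (β₀ + s) := rfl
    have hnxs : ‖xs s‖ = R := by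
      rw [hxs]
      simp only [norm_smul, Real.norm_eq_abs, dirVec_norm, mul_one, abs_of_pos hR]
    rw [h0, h1, hnxs] at hkb
    have heq : (-Real.sin α) * (R * Real.cos (β₀ + s)) + Real.cos α * (R * Real.sin (β₀ + s))
        = R * Real.sin (β₀ + s - α) := by
      rw [Real.sin_sub]; ring
    rw [heq, abs_mul, abs_of_pos hR] at hkb
    rw [le_div_iff₀ hr1]
    nlinarith
  -- equality of arcsin along the arc
  have hconst : ∀ s : ℝ, 0 ≤ s → s ≤ s₀ →
      Real.arcsin |Real.sin (β₀ + s - α₁)| = Real.arcsin (δ₁ / r) := by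
    intro s hsl hsr
    obtain ⟨hm1, hm2⟩ := hmem s hsl hsr
    have hb1 : |Real.sin (β₀ + s - α₁)| ≤ δ₁ / r := hsin_le α₁ δ₁ p₁ hout₁ hδ₁ s hm1
    have hb2 : |Real.sin (β₀ + s - α₂)| ≤ δ₂ / r := hsin_le α₂ δ₂ p₂ hout₂ hδ₂ s hm2
    have hg1 : Real.arcsin |Real.sin (β₀ + s - α₁)| ≤ Real.arcsin (δ₁ / r) :=
      Real.monotone_arcsin hb1
    have hg2 : Real.arcsin |Real.sin (β₀ + s - α₂)| ≤ Real.arcsin (δ₂ / r) :=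
      Real.monotone_arcsin hb2
    have habs12 : |α₁ - α₂| < Real.pi := by
      rw [abs_lt]
      constructor <;> [linarith [hα₁.1, hα₂.2]; linarith [hα₁.2, hα₂.1]]
    have hmin : min |α₁ - α₂| (Real.pi - |α₁ - α₂|) ≤ Real.arcsin |Real.sin (α₁ - α₂)| :=
      min_le_arcsin_abs_sin habs12
    have htri := arcsin_abs_sin_sub (β₀ + s - α₂) (β₀ + s - α₁)
    rw [show β₀ + s - α₂ - (β₀ + s - α₁) = α₁ - α₂ by ring] at htri
    linarith
  -- extract the contradiction from three points on the arc
  have hcosconst : ∀ s : ℝ, 0 ≤ s → s ≤ s₀ →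
      Real.cos (2 * (β₀ + s - α₁)) = 1 - 2 * Real.sin (Real.arcsin (δ₁ / r)) ^ 2 := by
    intro s hsl hsr
    have h1 : |Real.sin (β₀ + s - α₁)| = Real.sin (Real.arcsin (δ₁ / r)) := by
      rw [← hconst s hsl hsr, sin_arcsin_abs_sin]
    have h2 : Real.sin (β₀ + s - α₁) ^ 2 = Real.sin (Real.arcsin (δ₁ / r)) ^ 2 := by
      rw [← sq_abs, h1]
    have h3 := Real.cos_two_mul (β₀ + s - α₁)
    have h4 := Real.sin_sq_add_cos_sq (β₀ + s - α₁)
    linarith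
  have hπ := Real.pi_gt_three
  have hu := hcosconst s₀ hs₀pos.le le_rfl
  have hv := hcosconst (s₀ / 2) (by linarith) (by linarith)
  have hw := hcosconst (s₀ / 4) (by linarith) (by linarith)
  have huv : Real.cos (2 * (β₀ + s₀ - α₁)) = Real.cos (2 * (β₀ + s₀ / 2 - α₁)) := by
    rw [hu, hv]
  have huw : Real.cos (2 * (β₀ + s₀ - α₁)) = Real.cos (2 * (β₀ + s₀ / 4 - α₁)) := by
    rw [hu, hw]
  clear hconst hcosconst hmem hsin_le hsubP hsub hb1 hb2 hu hv hw
  obtain ⟨k₁, hk₁⟩ := Real.cos_eq_cos_iff.1 huv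
  obtain ⟨k₂, hk₂⟩ := Real.cos_eq_cos_iff.1 huw
  rcases hk₁ with hk₁ | hk₁
  · -- 2(β₀+s₀/2-α₁) = 2k₁π + 2(β₀+s₀-α₁) ⇒ -s₀ = 2k₁π
    have he : (k₁ : ℝ) * Real.pi = -(s₀ / 2) := by linarith
    have := int_cast_eq_zero_of_abs_mul_pi_lt (k := k₁) (by
      rw [he, abs_neg, abs_of_pos (by linarith)]; linarith)
    rw [this] at he
    simp at he
    linarith
  · rcases hk₂ with hk₂ | hk₂
    · have he : (k₂ : ℝ) * Real.pi = -(3 * s₀ / 4) / 1 := by linarith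
      have := int_cast_eq_zero_of_abs_mul_pi_lt (k := k₂) (by
        rw [he]; rw [abs_of_nonpos (by linarith)]; linarith)
      rw [this] at he
      simp at he
      linarith
    · -- both reflections
      have he : ((k₁ - k₂ : ℤ) : ℝ) * Real.pi = s₀ / 2 - s₀ / 4 := by
        push_cast
        linarith
      have := int_cast_eq_zero_of_abs_mul_pi_lt (k := k₁ - k₂) (by
        rw [he, abs_of_pos (by linarith)]; linarith)
      rw [this] at he
      simp at he
      linarith
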